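/- Strict positivity of the transfer scaling factors: in the multiuser MIMO setup with the matrix X as defined, since σ² > 0 the matrix X is invertible and the unique solution β ∈ ℝ^K of the linear system X·β = σ²·(tr(Q_1),…,tr(Q_K))ᵀ satisfies β_k > 0 for every k ∈ {1,…,K}. -/

import Mathlib

open Matrix BigOperators ComplexOrder

noncomputable section

/-- A diagonal complex matrix built from a real vector. -/
def diagC {n : ℕ} (v : Fin n → ℝ) : Matrix (Fin n) (Fin n) ℂ :=
  Matrix.diagonal (fun i => (v i : ℂ))

/-- The multiuser MIMO setup: `K` users, `N` BS antennas, per-user antenna counts `M k`,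
symbol counts `S k`, estimated channels `H k`, transmit/receive filters `G k`, `U k` with
unit-norm columns, invertible real diagonal scaling factors `α k`, Hermitian positive
semidefinite antenna correlation matrices `Rb k`, `Rm k`, channel estimation error variances
`σe2 k ≥ 0` and noise variance `σ2 > 0`. -/
structure MIMOSetup (K N : ℕ) where
  M : Fin K → ℕ
  S : Fin K → ℕ
  hM : ∀ k, 0 < M k
  hS : ∀ k, 0 < S k
  H : ∀ k : Fin K, Matrix (Fin N) (Fin (M k)) ℂ
  G : ∀ k : Fin K, Matrix (Fin N) (Fin (S k)) ℂ
  U : ∀ k : Fin K, Matrix (Fin (M k)) (Fin (S k)) ℂ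
  α : ∀ k : Fin K, Fin (S k) → ℝ
  Rb : Fin K → Matrix (Fin N) (Fin N) ℂ
  Rm : ∀ k : Fin K, Matrix (Fin (M k)) (Fin (M k)) ℂ
  σe2 : Fin K → ℝ
  σ2 : ℝ
  hG : ∀ k i, ((G k)ᴴ * G k) i i = 1
  hU : ∀ k i, ((U k)ᴴ * U k) i i = 1
  hα : ∀ k i, α k i ≠ 0
  hRb : ∀ k, (Rb k).PosSemidef
  hRm : ∀ k, (Rm k).PosSemidef
  hσe2 : ∀ k, 0 ≤ σe2 k
  hσ2 : 0 < σ2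

namespace MIMOSetup

variable {K N : ℕ} (s : MIMOSetup K N)

/-- `α_k` as a diagonal complex matrix. -/
def αM (k : Fin K) : Matrix (Fin (s.S k)) (Fin (s.S k)) ℂ := diagC (s.α k)

/-- `Γ_k^{DL}` for downlink power allocations `P`. -/
def GammaDL (P : ∀ k : Fin K, Matrix (Fin (s.S k)) (Fin (s.S k)) ℂ) (k : Fin K) :
    Matrix (Fin (s.M k)) (Fin (s.M k)) ℂ :=
  (s.H k)ᴴ * (∑ i, s.G i * P i * (s.G i)ᴴ) * s.H k
    + ((s.σe2 k : ℂ) * (s.Rb k * ∑ i, s.G i * P i * (s.G i)ᴴ).trace) • s.Rm k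
    + (s.σ2 : ℂ) • 1

/-- `Γ_c` for uplink power allocations `Q`. -/
def GammaC (Q : ∀ k : Fin K, Matrix (Fin (s.S k)) (Fin (s.S k)) ℂ) :
    Matrix (Fin N) (Fin N) ℂ :=
  (∑ i, (s.H i * s.U i * Q i * (s.U i)ᴴ * (s.H i)ᴴ
    + ((s.σe2 i : ℂ) * (s.Rm i * (s.U i * Q i * (s.U i)ᴴ)).trace) • s.Rb i))
    + (s.σ2 : ℂ) • 1

/-- The `k`-th user downlink AMSE `ξ̄_k^{DL}`. -/
def xiDLk (P : ∀ k : Fin K, Matrix (Fin (s.S k)) (Fin (s.S k)) ℂ) (k : Fin K) : ℝ :=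
  (s.S k : ℝ) + (((P k)⁻¹ * (s.αM k) ^ 2 * (s.U k)ᴴ * s.GammaDL P k * s.U k).trace).re
    - 2 * ((((s.G k)ᴴ * s.H k * s.U k * s.αM k).trace).re)

/-- The `k`-th user uplink AMSE `ξ̄_k^{UL}`. -/
def xiULk (Q : ∀ k : Fin K, Matrix (Fin (s.S k)) (Fin (s.S k)) ℂ) (k : Fin K) : ℝ :=
  (s.S k : ℝ) + (((Q k)⁻¹ * (s.αM k) ^ 2 * (s.G k)ᴴ * s.GammaC Q * s.G k).trace).re
    - 2 * (((s.αM k * (s.G k)ᴴ * s.H k * s.U k).trace).re)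

/-- Downlink sum AMSE `ξ̄^{DL}`. -/
def xiDL (P : ∀ k : Fin K, Matrix (Fin (s.S k)) (Fin (s.S k)) ℂ) : ℝ := ∑ k, s.xiDLk P k

/-- Uplink sum AMSE `ξ̄^{UL}`. -/
def xiUL (Q : ∀ k : Fin K, Matrix (Fin (s.S k)) (Fin (s.S k)) ℂ) : ℝ := ∑ k, s.xiULk Q k

end MIMOSetup

namespace MIMOSetup

variable {K N : ℕ}

/-- The matrix `X` of the user-wise uplink-to-downlink AMSE transfer (eq. (12)). -/
def Xmat (s : MIMOSetup K N) (Q : ∀ k : Fin K, Fin (s.S k) → ℝ) :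
    Matrix (Fin K) (Fin K) ℝ := fun k l =>
  if k = l then
    s.σ2 * (((diagC (Q k))⁻¹ * (s.αM k) ^ 2).trace).re
      + ∑ i ∈ Finset.univ.erase k,
        ((((diagC (Q k))⁻¹ * (s.αM k) ^ 2 * (s.G k)ᴴ * s.H i * s.U i * diagC (Q i)
            * (s.U i)ᴴ * (s.H i)ᴴ * s.G k).trace).re
          + s.σe2 i * (((s.Rm i * (s.U i * diagC (Q i) * (s.U i)ᴴ)).trace).re)
            * (((s.Rb i * (s.G k * (s.αM k) ^ 2 * (diagC (Q k))⁻¹ * (s.G k)ᴴ)).trace).re))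
  else
    -((((diagC (Q l))⁻¹ * (s.αM l) ^ 2 * (s.G l)ᴴ * s.H k * s.U k * diagC (Q k)
        * (s.U k)ᴴ * (s.H k)ᴴ * s.G l).trace).re
      + s.σe2 k * (((s.Rm k * (s.U k * diagC (Q k) * (s.U k)ᴴ)).trace).re)
        * (((s.Rb k * (s.G l * (s.αM l) ^ 2 * (diagC (Q l))⁻¹ * (s.G l)ᴴ)).trace).re))

end MIMOSetup


namespace MIMOXProof

lemma trace_re_nonneg {n : Type*} [Fintype n] [DecidableEq n] {A : Matrix n n ℂ}
    (hA : A.PosSemidef) : 0 ≤ A.trace.re := by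
  rw [Matrix.trace, Complex.re_sum]
  apply Finset.sum_nonneg
  intro i _
  have := hA.re_dotProduct_nonneg (Pi.single i 1)
  simpa [dotProduct, Matrix.mulVec_single, Pi.single_apply, Finset.sum_ite_eq,
    Matrix.diag] using this

lemma trace_mul_re_nonneg {n : Type*} [Fintype n] [DecidableEq n] {A B : Matrix n n ℂ}
    (hA : A.PosSemidef) (hB : B.PosSemidef) : 0 ≤ ((A * B).trace).re := by
  open scoped MatrixOrder Matrix.Norms.L2Operator in
  obtain ⟨C, rfl⟩ := CStarAlgebra.nonneg_iff_eq_star_mul_self.mp hB.nonneg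
  rw [← Matrix.mul_assoc, Matrix.trace_mul_cycle]
  exact trace_re_nonneg (hA.mul_mul_conjTranspose_same C)

lemma key_nonneg {K : ℕ} (σ2 : ℝ) (a : Fin K → ℝ) (T : Fin K → Fin K → ℝ)
    (hσ : 0 < σ2) (ha : ∀ k, 0 < a k) (hT : ∀ k l, 0 ≤ T k l)
    (X : Matrix (Fin K) (Fin K) ℝ)
    (hXd : ∀ k, X k k = σ2 * a k + ∑ i ∈ Finset.univ.erase k, T i k)
    (hXo : ∀ k l, k ≠ l → X k l = -(T k l))
    (β : Fin K → ℝ) (hb : ∀ k, 0 ≤ (X *ᵥ β) k) : ∀ k, 0 ≤ β k := by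
  by_contra h
  push_neg at h
  obtain ⟨m, hm⟩ := h
  set P : Finset (Fin K) := Finset.univ.filter (fun k => β k < 0) with hPdef
  have hmP : m ∈ P := by simp [hPdef, hm]
  have hsum : ∑ k ∈ P, (X *ᵥ β) k = ∑ l, (∑ k ∈ P, X k l) * β l := by
    simp only [Matrix.mulVec, dotProduct]
    rw [Finset.sum_comm]
    simp [Finset.sum_mul]
  have h1 : 0 ≤ ∑ k ∈ P, (X *ᵥ β) k := Finset.sum_nonneg fun k _ => hb k
  have h2 : ∀ l, (∑ k ∈ P, X k l) * β l ≤ if l ∈ P then σ2 * a l * β l else 0 := by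
    intro l
    by_cases hl : l ∈ P
    · simp only [hl, if_true]
      have hβl : β l < 0 := by simpa [hPdef] using hl
      have hc : σ2 * a l ≤ ∑ k ∈ P, X k l := by
        rw [← Finset.add_sum_erase _ _ hl, hXd l]
        have he : ∑ k ∈ P.erase l, X k l = -∑ k ∈ P.erase l, T k l := by
          rw [← Finset.sum_neg_distrib]
          exact Finset.sum_congr rfl fun k hk => hXo k l (Finset.ne_of_mem_erase hk)
        rw [he]
        have h3 : ∑ k ∈ P.erase l, T k l ≤ ∑ i ∈ Finset.univ.erase l, T i l :=
          Finset.sum_le_sum_of_subset_of_nonneg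
            (fun x hx => by
              rcases Finset.mem_erase.mp hx with ⟨hx1, _⟩
              exact Finset.mem_erase.mpr ⟨hx1, Finset.mem_univ x⟩)
            (fun i _ _ => hT i l)
        linarith
      nlinarith
    · simp only [hl, if_false]
      have hβl : 0 ≤ β l := by
        by_contra h'
        exact hl (by simp [hPdef]; linarith)
      have hc : ∑ k ∈ P, X k l ≤ 0 := by
        apply Finset.sum_nonpos
        intro k hk
        have hk' : k ≠ l := by rintro rfl; exact hl hk
        rw [hXo k l hk']
        linarith [hT k l]
      exact mul_nonpos_of_nonpos_of_nonneg hc hβl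
  have h4 : ∑ l, (∑ k ∈ P, X k l) * β l ≤ ∑ l, (if l ∈ P then σ2 * a l * β l else 0) :=
    Finset.sum_le_sum fun l _ => h2 l
  have h5 : ∑ l, (if l ∈ P then σ2 * a l * β l else 0) < 0 := by
    rw [Finset.sum_ite_mem, Finset.univ_inter]
    have := Finset.sum_lt_sum_of_nonempty ⟨m, hmP⟩
      (f := fun l => σ2 * a l * β l) (g := fun _ => (0:ℝ))
      (fun l hl => by
        have hβl : β l < 0 := by simpa [hPdef] using hl
        have hal := ha l
        show σ2 * a l * β l < (fun _ => (0:ℝ)) l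
        simp only []
        exact mul_neg_of_pos_of_neg (mul_pos hσ hal) hβl)
    simpa using this
  rw [hsum] at h1
  linarith

/-- The diagonal coefficient `a_k`. -/
def aAux {K N : ℕ} (s : MIMOSetup K N) (Q : ∀ k : Fin K, Fin (s.S k) → ℝ) (k : Fin K) : ℝ :=
  (((diagC (Q k))⁻¹ * (s.αM k) ^ 2).trace).re

/-- The interference coefficient `T k l` (signal of user `k` measured at receiver `l`). -/
def TAux {K N : ℕ} (s : MIMOSetup K N) (Q : ∀ k : Fin K, Fin (s.S k) → ℝ) (k l : Fin K) : ℝ :=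
  (((diagC (Q l))⁻¹ * (s.αM l) ^ 2 * (s.G l)ᴴ * s.H k * s.U k * diagC (Q k)
      * (s.U k)ᴴ * (s.H k)ᴴ * s.G l).trace).re
    + s.σe2 k * (((s.Rm k * (s.U k * diagC (Q k) * (s.U k)ᴴ)).trace).re)
      * (((s.Rb k * (s.G l * (s.αM l) ^ 2 * (diagC (Q l))⁻¹ * (s.G l)ᴴ)).trace).re)

end MIMOXProof

open MIMOXProof in
/-- **Strict positivity of the transfer scaling factors.** Since `σ² > 0`, the matrix `X`
is invertible and the unique solution `β` of `X·β = σ²·(tr Q_1, …, tr Q_K)ᵀ` has all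
entries strictly positive. -/
theorem Xmat_invertible_and_solution_positive {K N : ℕ} (hK : 0 < K) (hN : 0 < N)
    (s : MIMOSetup K N)
    (Q : ∀ k : Fin K, Fin (s.S k) → ℝ) (hQ : ∀ k i, 0 < Q k i) :
    IsUnit (s.Xmat Q) ∧
      ∀ β : Fin K → ℝ,
        (s.Xmat Q *ᵥ β = fun k => s.σ2 * ((diagC (Q k)).trace).re) →
          ∀ k, 0 < β k := by
  classical
  have hQne : ∀ k (i : Fin (s.S k)), (Q k i : ℂ) ≠ 0 :=
    fun k i => by exact_mod_cast (hQ k i).ne'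
  have hDinv : ∀ k, (diagC (Q k))⁻¹ = diagC (fun i => (Q k i)⁻¹) := by
    intro k
    apply Matrix.inv_eq_right_inv
    rw [diagC, diagC, Matrix.diagonal_mul_diagonal]
    rw [← Matrix.diagonal_one]
    refine congrArg Matrix.diagonal (funext fun i => ?_)
    rw [← Complex.ofReal_mul, mul_inv_cancel₀ (hQ k i).ne']
    simp
  have hD : ∀ k, (diagC (Q k))⁻¹ * (s.αM k) ^ 2
      = Matrix.diagonal (fun i => (((Q k i)⁻¹ * (s.α k i) ^ 2 : ℝ) : ℂ)) := by
    intro k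
    rw [hDinv k]
    simp only [MIMOSetup.αM, diagC, Matrix.diagonal_pow, Matrix.diagonal_mul_diagonal]
    refine congrArg Matrix.diagonal (funext fun i => ?_)
    simp only [Pi.mul_apply, Pi.pow_apply]
    push_cast
    ring
  have hD' : ∀ k, (s.αM k) ^ 2 * (diagC (Q k))⁻¹
      = Matrix.diagonal (fun i => (((s.α k i) ^ 2 * (Q k i)⁻¹ : ℝ) : ℂ)) := by
    intro k
    rw [hDinv k]
    simp only [MIMOSetup.αM, diagC, Matrix.diagonal_pow, Matrix.diagonal_mul_diagonal]
    refine congrArg Matrix.diagonal (funext fun i => ?_)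
    simp only [Pi.mul_apply, Pi.pow_apply]
    push_cast
    ring
  have hDpsd : ∀ k, ((diagC (Q k))⁻¹ * (s.αM k) ^ 2).PosSemidef := by
    intro k
    rw [hD k]
    exact Matrix.posSemidef_diagonal_iff.mpr fun i =>
      Complex.zero_le_real.mpr (mul_nonneg (inv_nonneg.mpr (hQ k i).le) (sq_nonneg _))
  have hD'psd : ∀ k, ((s.αM k) ^ 2 * (diagC (Q k))⁻¹).PosSemidef := by
    intro k
    rw [hD' k]
    exact Matrix.posSemidef_diagonal_iff.mpr fun i =>
      Complex.zero_le_real.mpr (mul_nonneg (sq_nonneg _) (inv_nonneg.mpr (hQ k i).le))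
  have hQpsd : ∀ k, (diagC (Q k)).PosSemidef := fun k =>
    Matrix.posSemidef_diagonal_iff.mpr fun i =>
      Complex.zero_le_real.mpr (hQ k i).le
  -- positivity of the diagonal coefficients
  have ha : ∀ k, 0 < aAux s Q k := by
    intro k
    rw [aAux, hD k, Matrix.trace_diagonal, Complex.re_sum]
    haveI : Nonempty (Fin (s.S k)) := Fin.pos_iff_nonempty.mp (s.hS k)
    apply Finset.sum_pos _ Finset.univ_nonempty
    intro i _
    rw [Complex.ofReal_re]
    exact mul_pos (inv_pos.mpr (hQ k i)) (pow_two_pos_of_ne_zero (s.hα k i))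
  -- nonnegativity of the interference coefficients
  have hT : ∀ k l, 0 ≤ TAux s Q k l := by
    intro k l
    rw [TAux]
    have e1 : (diagC (Q l))⁻¹ * (s.αM l) ^ 2 * (s.G l)ᴴ * s.H k * s.U k * diagC (Q k)
        * (s.U k)ᴴ * (s.H k)ᴴ * s.G l
        = ((diagC (Q l))⁻¹ * (s.αM l) ^ 2)
          * (((s.G l)ᴴ * s.H k * s.U k) * diagC (Q k) * ((s.G l)ᴴ * s.H k * s.U k)ᴴ) := by
      simp only [Matrix.conjTranspose_mul, Matrix.conjTranspose_conjTranspose,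
        Matrix.mul_assoc]
    have e2 : s.G l * (s.αM l) ^ 2 * (diagC (Q l))⁻¹ * (s.G l)ᴴ
        = s.G l * ((s.αM l) ^ 2 * (diagC (Q l))⁻¹) * (s.G l)ᴴ := by
      simp only [Matrix.mul_assoc]
    have t1 : 0 ≤ (((diagC (Q l))⁻¹ * (s.αM l) ^ 2 * (s.G l)ᴴ * s.H k * s.U k * diagC (Q k)
        * (s.U k)ᴴ * (s.H k)ᴴ * s.G l).trace).re := by
      rw [e1]
      exact trace_mul_re_nonneg (hDpsd l) ((hQpsd k).mul_mul_conjTranspose_same _)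
    have t2 : 0 ≤ ((s.Rm k * (s.U k * diagC (Q k) * (s.U k)ᴴ)).trace).re :=
      trace_mul_re_nonneg (s.hRm k) ((hQpsd k).mul_mul_conjTranspose_same _)
    have t3 : 0 ≤ ((s.Rb k * (s.G l * (s.αM l) ^ 2 * (diagC (Q l))⁻¹ * (s.G l)ᴴ)).trace).re := by
      rw [e2]
      exact trace_mul_re_nonneg (s.hRb k) ((hD'psd l).mul_mul_conjTranspose_same _)
    exact add_nonneg t1 (mul_nonneg (mul_nonneg (s.hσe2 k) t2) t3)
  -- the matrix X in terms of aAux and TAux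
  have hXd : ∀ k, s.Xmat Q k k
      = s.σ2 * aAux s Q k + ∑ i ∈ Finset.univ.erase k, TAux s Q i k := by
    intro k
    simp only [MIMOSetup.Xmat, if_pos rfl]
    rfl
  have hXo : ∀ k l, k ≠ l → s.Xmat Q k l = -(TAux s Q k l) := by
    intro k l hkl
    simp only [MIMOSetup.Xmat, if_neg hkl]
    rfl
  have hnn : ∀ β : Fin K → ℝ, (∀ k, 0 ≤ (s.Xmat Q *ᵥ β) k) → ∀ k, 0 ≤ β k :=
    fun β hb => key_nonneg s.σ2 (aAux s Q) (TAux s Q) s.hσ2 ha hT (s.Xmat Q) hXd hXo β hb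
  have hinj : ∀ β : Fin K → ℝ, s.Xmat Q *ᵥ β = 0 → β = 0 := by
    intro β h0
    have h1 := hnn β (fun k => by rw [h0]; simp)
    have h2 := hnn (-β) (fun k => by rw [Matrix.mulVec_neg, h0]; simp)
    funext k
    have := h2 k
    simp only [Pi.neg_apply, Pi.zero_apply] at this ⊢
    linarith [h1 k]
  have hdet : (s.Xmat Q).det ≠ 0 := by
    intro hd
    obtain ⟨v, hv0, hv⟩ := Matrix.exists_mulVec_eq_zero_iff.mpr hd
    exact hv0 (hinj v hv)
  have hXkk_pos : ∀ k, 0 < s.Xmat Q k k := by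
    intro k
    rw [hXd k]
    have : 0 ≤ ∑ i ∈ Finset.univ.erase k, TAux s Q i k :=
      Finset.sum_nonneg fun i _ => hT i k
    have := mul_pos s.hσ2 (ha k)
    linarith
  have hbpos : ∀ k, 0 < s.σ2 * ((diagC (Q k)).trace).re := by
    intro k
    apply mul_pos s.hσ2
    rw [diagC, Matrix.trace_diagonal, Complex.re_sum]
    haveI : Nonempty (Fin (s.S k)) := Fin.pos_iff_nonempty.mp (s.hS k)
    apply Finset.sum_pos _ Finset.univ_nonempty
    intro i _
    rw [Complex.ofReal_re]
    exact hQ k i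
  refine ⟨(Matrix.isUnit_iff_isUnit_det _).mpr (isUnit_iff_ne_zero.mpr hdet), ?_⟩
  intro β hβ k
  have hge : ∀ l, 0 ≤ β l := hnn β (fun l => by rw [hβ]; exact (hbpos l).le)
  have hrow : s.σ2 * ((diagC (Q k)).trace).re
      = s.Xmat Q k k * β k + ∑ l ∈ Finset.univ.erase k, s.Xmat Q k l * β l := by
    have h := congrFun hβ k
    simp only [Matrix.mulVec, dotProduct] at h
    rw [← h, ← Finset.add_sum_erase _ _ (Finset.mem_univ k)]
  have hoff : ∑ l ∈ Finset.univ.erase k, s.Xmat Q k l * β l ≤ 0 := by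
    apply Finset.sum_nonpos
    intro l hl
    have hkl : k ≠ l := fun h => (Finset.mem_erase.mp hl).1 h.symm
    rw [hXo k l hkl]
    have := hT k l
    have := hge l
    nlinarith
  have hXβ : 0 < s.Xmat Q k k * β k := by
    have := hbpos k
    linarith [hrow, hoff]
  by_contra hcon
  push_neg at hcon
  nlinarith [hXkk_pos k]
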